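/- Let p : [u] → Finset [s] assign to each query x a set of probed cells with |p(x)| ≤ t. For any q with t ≤ q ≤ s, there exists a set C ⊆ [s] with |C| = q such that the number of x ∈ [u] with p(x) ⊆ C is at least u · C(s−t, q−t) / C(s, q). -/
import Mathlib

open Finset

lemma choose_add_add_le (n m d : ℕ) : n.choose m ≤ (n + d).choose (m + d) := by
  induction d with
  | zero => simp
  | succ d ih =>
    have : (n + (d+1)).choose (m + (d+1)) = (n+d).choose (m+d) + (n+d).choose (m+d+1) := by
      rw [Nat.add_succ, Nat.add_succ, Nat.choose_succ_succ]
    omega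

lemma count_supersets {α : Type*} [DecidableEq α] (s A : Finset α) (hA : A ⊆ s)
    (q : ℕ) (h : A.card ≤ q) :
    ((s.powersetCard q).filter (fun C => A ⊆ C)).card
      = (s.card - A.card).choose (q - A.card) := by
  rw [← Finset.card_sdiff_of_subset hA, ← Finset.card_powersetCard]
  apply Finset.card_bij (fun C _ => C \ A)
  · intro C hC
    simp only [mem_filter, mem_powersetCard] at hC ⊢
    exact ⟨Finset.sdiff_subset_sdiff hC.1.1 (le_refl A),
      by rw [Finset.card_sdiff_of_subset hC.2, hC.1.2]⟩
  · intro C₁ h₁ C₂ h₂ hEq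
    simp only [mem_filter, mem_powersetCard] at h₁ h₂
    have e1 : C₁ = C₁ \ A ∪ A := by rw [Finset.sdiff_union_of_subset h₁.2]
    have e2 : C₂ = C₂ \ A ∪ A := by rw [Finset.sdiff_union_of_subset h₂.2]
    rw [e1, e2, hEq]
  · intro B hB
    simp only [mem_powersetCard] at hB
    refine ⟨B ∪ A, ?_, ?_⟩
    · have hBA : Disjoint B A := Finset.disjoint_of_subset_left hB.1 Finset.sdiff_disjoint
      simp only [mem_filter, mem_powersetCard]
      refine ⟨⟨Finset.union_subset (hB.1.trans Finset.sdiff_subset) hA, ?_⟩,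
        Finset.subset_union_right⟩
      rw [Finset.card_union_of_disjoint hBA, hB.2]
      omega
    · have hBA : Disjoint B A := Finset.disjoint_of_subset_left hB.1 Finset.sdiff_disjoint
      rw [Finset.union_sdiff_right, Finset.sdiff_eq_self_of_disjoint hBA]

/-- Cell-sampling averaging step: if each query probes at most `t` cells out of `s`,
then for any `t ≤ q ≤ s` there is a set `C` of `q` cells resolving at least
`u · C(s-t, q-t)/C(s, q)` queries. -/
theorem stmt10 (u s t q : ℕ) (p : Fin u → Finset (Fin s)) (hp : ∀ x, (p x).card ≤ t)
    (htq : t ≤ q) (hqs : q ≤ s) :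
    ∃ C : Finset (Fin s), C.card = q ∧
      (u : ℝ) * ((s - t).choose (q - t) : ℝ) / (s.choose q : ℝ)
        ≤ ((Finset.univ.filter (fun x : Fin u => p x ⊆ C)).card : ℝ) := by
  classical
  set S := (Finset.univ : Finset (Fin s)).powersetCard q with hS
  have hcardS : S.card = s.choose q := by
    rw [hS, Finset.card_powersetCard, Finset.card_univ, Fintype.card_fin]
  have hSpos : 0 < S.card := by
    rw [hcardS]; exact Nat.choose_pos hqs
  -- lower bound on the total sum
  have key : u * ((s - t).choose (q - t)) ≤ ∑ C ∈ S, (Finset.univ.filter (fun x : Fin u => p x ⊆ C)).card := by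
    have swap : ∑ C ∈ S, (Finset.univ.filter (fun x : Fin u => p x ⊆ C)).card
        = ∑ x : Fin u, (S.filter (fun C => p x ⊆ C)).card := by
      simp_rw [Finset.card_filter]
      rw [Finset.sum_comm]
    rw [swap]
    have hx : ∀ x : Fin u, (s - t).choose (q - t) ≤ (S.filter (fun C => p x ⊆ C)).card := by
      intro x
      have hcard := count_supersets (Finset.univ : Finset (Fin s)) (p x)
        (Finset.subset_univ _) q ((hp x).trans htq)
      rw [hS, hcard, Finset.card_univ, Fintype.card_fin]
      have hk : (p x).card ≤ t := hp x
      have e1 : s - (p x).card = (s - t) + (t - (p x).card) := by omega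
      have e2 : q - (p x).card = (q - t) + (t - (p x).card) := by omega
      rw [e1, e2]
      exact choose_add_add_le _ _ _
    calc u * ((s - t).choose (q - t)) = ∑ _x : Fin u, (s - t).choose (q - t) := by
          rw [Finset.sum_const, Finset.card_univ, Fintype.card_fin, smul_eq_mul]
      _ ≤ _ := Finset.sum_le_sum (fun x _ => hx x)
  -- averaging
  have hne : S.Nonempty := Finset.card_pos.mp hSpos
  have havg : ∃ C ∈ S,
      ((∑ C ∈ S, ((Finset.univ.filter (fun x : Fin u => p x ⊆ C)).card : ℝ)) / S.card)
        ≤ ((Finset.univ.filter (fun x : Fin u => p x ⊆ C)).card : ℝ) := by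
    apply Finset.exists_le_of_sum_le hne
    rw [Finset.sum_const, nsmul_eq_mul]
    rw [mul_div_cancel₀]
    exact_mod_cast hSpos.ne'
  obtain ⟨C, hCS, hC⟩ := havg
  refine ⟨C, ?_, ?_⟩
  · exact (Finset.mem_powersetCard.mp hCS).2
  · refine le_trans ?_ hC
    rw [hcardS] at *
    rw [div_le_div_iff₀ (by exact_mod_cast Nat.choose_pos hqs) (by exact_mod_cast Nat.choose_pos hqs)]
    have : (u * ((s - t).choose (q - t)) : ℝ) ≤ ∑ C ∈ S, ((Finset.univ.filter (fun x : Fin u => p x ⊆ C)).card : ℝ) := by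
      push_cast [← Nat.cast_sum]
      exact_mod_cast key
    nlinarith [show (0:ℝ) < s.choose q from by exact_mod_cast Nat.choose_pos hqs]
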